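/- arXiv:1609.02040 — 4 statements merged into one kernel-verified Lean document; each statement's English description precedes it below -/
import Mathlib

section
/- Let L : (Fin n → ℝ) × (Fin n → ℝ) → ℝ be continuous. Suppose that for every continuously differentiable path x : ℝ → (Fin n → ℝ) on an interval [α, β] and every continuously differentiable φ : [a, b] → [α, β] with φ(a) = α, φ(b) = β and φ' > 0 on [a, b], one has ∫_a^b L(x(φ(u)), φ'(u) • x'(φ(u))) du = ∫_α^β L(x(t), x'(t)) dt. Then L is positively 1-homogeneous in its second argument: L(x, λv) = λ·L(x, v) for all x, v and all λ > 0. -/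
/-- If the action of a continuous Lagrangian along every continuously
differentiable path is independent of the (admissible) parameterization of the
path, then the Lagrangian is positively 1-homogeneous in its velocity
argument. -/
theorem parameterization_independent_implies_homogeneous {n : ℕ}
    (L : (Fin n → ℝ) × (Fin n → ℝ) → ℝ)
    (hL : Continuous L)
    (h : ∀ (α β a b : ℝ), a ≤ b →
      ∀ (x x' : ℝ → Fin n → ℝ),
        (∀ t ∈ Set.Icc α β, HasDerivAt x (x' t) t) →
        ContinuousOn x' (Set.Icc α β) →
      ∀ (φ φ' : ℝ → ℝ),
        (∀ u ∈ Set.Icc a b, HasDerivAt φ (φ' u) u) →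
        ContinuousOn φ' (Set.Icc a b) →
        (∀ u ∈ Set.Icc a b, 0 < φ' u) →
        Set.MapsTo φ (Set.Icc a b) (Set.Icc α β) →
        φ a = α → φ b = β →
        ∫ u in a..b, L (x (φ u), φ' u • x' (φ u)) = ∫ t in α..β, L (x t, x' t)) :
    ∀ (x v : Fin n → ℝ) (l : ℝ), 0 < l → L (x, l • v) = l * L (x, v) := by
  intro x v l hl
  have hl0 : l ≠ 0 := ne_of_gt hl
  set f : ℝ → ℝ := fun u => L (x + (l * u) • v, l • v) with hfdef
  set g : ℝ → ℝ := fun t => L (x + t • v, v) with hgdef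
  have hfc : Continuous f :=
    hL.comp (Continuous.prodMk
      (continuous_const.add (((continuous_const.mul continuous_id).smul continuous_const)))
      continuous_const)
  have hgc : Continuous g :=
    hL.comp (Continuous.prodMk
      (continuous_const.add (continuous_id.smul continuous_const)) continuous_const)
  have hxd : ∀ t : ℝ, HasDerivAt (fun t : ℝ => x + t • v) v t := fun t => by
    simpa using ((hasDerivAt_id t).smul_const v).const_add x
  have hφd : ∀ u : ℝ, HasDerivAt (fun u : ℝ => l * u) l u := fun u => by
    simpa using (hasDerivAt_id u).const_mul l
  have key : ∀ ε : ℝ, (∫ u in (0:ℝ)..(ε / l), f u) = ∫ t in (0:ℝ)..ε, g t := by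
    intro ε
    rcases le_or_gt 0 ε with hε | hε
    · have hm : Set.MapsTo (fun u : ℝ => l * u) (Set.Icc 0 (ε / l)) (Set.Icc 0 ε) := by
        intro u hu
        obtain ⟨h1, h2⟩ := hu
        constructor
        · positivity
        · calc l * u ≤ l * (ε / l) := by nlinarith
            _ = ε := by field_simp
      have := h 0 ε 0 (ε / l) (by positivity) (fun t => x + t • v) (fun _ => v)
        (fun t _ => hxd t) continuousOn_const (fun u => l * u) (fun _ => l)
        (fun u _ => hφd u) continuousOn_const (fun u _ => hl) hm
        (by simp) (by field_simp)
      simpa [f, g] using this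
    · have hε' : ε / l ≤ 0 := by
        apply div_nonpos_of_nonpos_of_nonneg hε.le hl.le
      have hm : Set.MapsTo (fun u : ℝ => l * u) (Set.Icc (ε / l) 0) (Set.Icc ε 0) := by
        intro u hu
        obtain ⟨h1, h2⟩ := hu
        constructor
        · calc ε = l * (ε / l) := by field_simp
            _ ≤ l * u := mul_le_mul_of_nonneg_left h1 hl.le
        · exact mul_nonpos_of_nonneg_of_nonpos hl.le h2
      have := h ε 0 (ε / l) 0 hε' (fun t => x + t • v) (fun _ => v)
        (fun t _ => hxd t) continuousOn_const (fun u => l * u) (fun _ => l)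
        (fun u _ => hφd u) continuousOn_const (fun u _ => hl) hm
        (by field_simp) (by simp)
      rw [intervalIntegral.integral_symm, intervalIntegral.integral_symm ε]
      simpa [f, g] using congrArg Neg.neg this
  have hF : HasDerivAt (fun s : ℝ => ∫ u in (0:ℝ)..s, f u) (f 0) 0 :=
    (hfc.integral_hasStrictDerivAt 0 0).hasDerivAt
  have hc : HasDerivAt (fun ε : ℝ => ε / l) l⁻¹ 0 := by
    simpa using (hasDerivAt_id (0:ℝ)).div_const l
  have hF' : HasDerivAt (fun s : ℝ => ∫ u in (0:ℝ)..s, f u) (f 0) ((0:ℝ) / l) := by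
    rw [zero_div]; exact hF
  have hcomp : HasDerivAt (fun ε : ℝ => ∫ u in (0:ℝ)..(ε / l), f u) (f 0 * l⁻¹) 0 := by
    exact hF'.comp 0 hc
  have hG : HasDerivAt (fun s : ℝ => ∫ t in (0:ℝ)..s, g t) (g 0) 0 :=
    (hgc.integral_hasStrictDerivAt 0 0).hasDerivAt
  have hcomp' : HasDerivAt (fun s : ℝ => ∫ t in (0:ℝ)..s, g t) (f 0 * l⁻¹) 0 := by
    have : (fun ε : ℝ => ∫ u in (0:ℝ)..(ε / l), f u) = fun s : ℝ => ∫ t in (0:ℝ)..s, g t :=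
      funext key
    rwa [this] at hcomp
  have huniq : f 0 * l⁻¹ = g 0 := hcomp'.unique hG
  have hf0 : f 0 = L (x, l • v) := by simp [f]
  have hg0 : g 0 = L (x, v) := by simp [g]
  rw [hf0, hg0] at huniq
  field_simp at huniq
  linarith [huniq]
end

section
/- Let L : (Fin n → ℝ) × (Fin n → ℝ) → ℝ be continuously differentiable on the set of points (x, v) with v ≠ 0 and positively 1-homogeneous in its second argument. Let x : ℝ → (Fin n → ℝ) be a twice continuously differentiable path on [α, β] with nonvanishing derivative, let φ : [a, b] → [α, β] be twice continuously differentiable with φ(a) = α, φ(b) = β and φ' > 0, and set y = x ∘ φ. Let N : (Fin n → ℝ)* → ℝ be any fixed function on covectors (e.g. a Minkowski-type seminorm) satisfying N(λ·ξ) = λ·N(ξ) for λ > 0. Then ∫_a^b N( D₁L(y(u), y'(u)) − d/du [D₂L(y(u), y'(u))] ) du = ∫_α^β N( D₁L(x(t), x'(t)) − d/dt [D₂L(x(t), x'(t))] ) dt; that is, the ageodesicity of a path does not depend on its admissible parameterization. -/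
open Set Filter MeasureTheory Topology

/-- Derivative of a composition with a local diffeomorphism, valid even when the outer
function is not differentiable (both sides are then zero). -/
lemma deriv_comp_localdiffeo {E : Type*} [NormedAddCommGroup E] [NormedSpace ℝ E]
    (g : ℝ → E) {φ : ℝ → ℝ} {c u : ℝ} (hφ : HasStrictDerivAt φ c u) (hc : c ≠ 0) :
    deriv (g ∘ φ) u = c • deriv g (φ u) := by
  by_cases hg : DifferentiableAt ℝ g (φ u)
  · exact (HasDerivAt.scomp (h := φ) (x := u) hg.hasDerivAt hφ.hasDerivAt).deriv
  · have h1 : deriv g (φ u) = 0 := deriv_zero_of_not_differentiableAt hg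
    have h2 : ¬ DifferentiableAt ℝ (g ∘ φ) u := by
      intro hd
      apply hg
      have hψ : HasStrictDerivAt (hφ.localInverse φ c u hc) c⁻¹ (φ u) := hφ.to_localInverse hc
      have hψu : (hφ.localInverse φ c u hc) (φ u) = u :=
        (hφ.hasStrictFDerivAt_equiv hc).localInverse_apply_image
      have hev : ∀ᶠ y in 𝓝 (φ u), φ ((hφ.localInverse φ c u hc) y) = y :=
        (hφ.hasStrictFDerivAt_equiv hc).eventually_right_inverse
      have hdiff : DifferentiableAt ℝ ((g ∘ φ) ∘ (hφ.localInverse φ c u hc)) (φ u) := by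
        refine DifferentiableAt.comp _ ?_ hψ.hasDerivAt.differentiableAt
        rw [hψu]; exact hd
      refine hdiff.congr_of_eventuallyEq ?_
      filter_upwards [hev] with y hy
      simp [Function.comp, hy]
    rw [deriv_zero_of_not_differentiableAt h2, h1, smul_zero]

/-- **Parameterization independence of the ageodesicity.** For a geometric
Lagrangian (continuously differentiable away from zero velocity and positively
1-homogeneous in the velocity), and any positively 1-homogeneous function `N`
on covectors, the integral of `N` applied to the Euler–Lagrange covector along
a path is the same for any admissible reparameterization `y = x ∘ φ` of the
path. -/
theorem ageodesicity_parameterization_independent {n : ℕ}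
    (L : (Fin n → ℝ) × (Fin n → ℝ) → ℝ)
    (hL : ContDiffOn ℝ 1 L {p : (Fin n → ℝ) × (Fin n → ℝ) | p.2 ≠ 0})
    (hhom : ∀ (x v : Fin n → ℝ) (l : ℝ), 0 < l → L (x, l • v) = l * L (x, v))
    (α β a b : ℝ) (hab : a ≤ b)
    (x : ℝ → Fin n → ℝ) (hx : ContDiffOn ℝ 2 x (Set.Icc α β))
    (hx' : ∀ t ∈ Set.Icc α β, deriv x t ≠ 0)
    (φ : ℝ → ℝ) (hφ : ContDiffOn ℝ 2 φ (Set.Icc a b))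
    (hφpos : ∀ u ∈ Set.Icc a b, 0 < deriv φ u)
    (hφmaps : Set.MapsTo φ (Set.Icc a b) (Set.Icc α β))
    (hφa : φ a = α) (hφb : φ b = β)
    (N : ((Fin n → ℝ) →L[ℝ] ℝ) → ℝ)
    (hN : ∀ (ξ : (Fin n → ℝ) →L[ℝ] ℝ) (l : ℝ), 0 < l → N (l • ξ) = l * N ξ) :
    (∫ u in a..b,
      N (fderiv ℝ (fun y => L (y, deriv (x ∘ φ) u)) ((x ∘ φ) u)
        - deriv (fun s => fderiv ℝ (fun w => L ((x ∘ φ) s, w)) (deriv (x ∘ φ) s)) u))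
      =
    (∫ t in α..β,
      N (fderiv ℝ (fun y => L (y, deriv x t)) (x t)
        - deriv (fun s => fderiv ℝ (fun w => L (x s, w)) (deriv x s)) t)) := by
  rcases eq_or_lt_of_le hab with h | hlt
  · subst h
    have hαβ : α = β := by rw [← hφa, ← hφb]
    subst hαβ
    simp [intervalIntegral.integral_same]
  -- basic differentiability of L off the zero section
  have hU : IsOpen {p : (Fin n → ℝ) × (Fin n → ℝ) | p.2 ≠ 0} :=
    isOpen_ne.preimage continuous_snd
  have hLdiff : ∀ p : (Fin n → ℝ) × (Fin n → ℝ), p.2 ≠ 0 → DifferentiableAt ℝ L p :=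
    fun p hp => (hL.contDiffAt (hU.mem_nhds hp)).differentiableAt one_ne_zero
  have hD1 : ∀ (x₀ v : Fin n → ℝ), v ≠ 0 → DifferentiableAt ℝ (fun y => L (y, v)) x₀ := by
    intro x₀ v hv
    exact (hLdiff (x₀, v) hv).comp x₀ (differentiableAt_id.prodMk (differentiableAt_const v))
  have hD2 : ∀ (x₀ v : Fin n → ℝ), v ≠ 0 → DifferentiableAt ℝ (fun w => L (x₀, w)) v := by
    intro x₀ v hv
    exact (hLdiff (x₀, v) hv).comp v ((differentiableAt_const x₀).prodMk differentiableAt_id)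
  -- homogeneity of degree 0 of D₂L in the velocity
  have hB : ∀ (x₀ v : Fin n → ℝ) (c : ℝ), v ≠ 0 → 0 < c →
      fderiv ℝ (fun w => L (x₀, w)) (c • v) = fderiv ℝ (fun w => L (x₀, w)) v := by
    intro x₀ v c hv hc
    have hcv : c • v ≠ 0 := smul_ne_zero (ne_of_gt hc) hv
    have h1 : HasFDerivAt (fun w => L (x₀, w))
        (fderiv ℝ (fun w => L (x₀, w)) (c • v)) (c • v) := (hD2 x₀ (c • v) hcv).hasFDerivAt
    have h2 : HasFDerivAt (fun w : Fin n → ℝ => c • w)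
        (c • ContinuousLinearMap.id ℝ (Fin n → ℝ)) v := (hasFDerivAt_id v).const_smul c
    have h3 := h1.comp v h2
    have heq : ((fun w => L (x₀, w)) ∘ fun w : Fin n → ℝ => c • w)
        = fun w => c * L (x₀, w) := funext fun w => hhom x₀ w c hc
    rw [heq] at h3
    have h4 : HasFDerivAt (fun w => c * L (x₀, w))
        (c • fderiv ℝ (fun w => L (x₀, w)) v) v := (hD2 x₀ v hv).hasFDerivAt.const_mul c
    have h5 := h3.unique h4
    have hcomp : (fderiv ℝ (fun w => L (x₀, w)) (c • v)).comp
        (c • ContinuousLinearMap.id ℝ (Fin n → ℝ))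
        = c • fderiv ℝ (fun w => L (x₀, w)) (c • v) := by
      ext w; simp
    rw [hcomp] at h5
    exact smul_right_injective _ (ne_of_gt hc) h5
  -- homogeneity of degree 1 of D₁L in the velocity
  have hC : ∀ (x₀ v : Fin n → ℝ) (c : ℝ), v ≠ 0 → 0 < c →
      fderiv ℝ (fun y => L (y, c • v)) x₀ = c • fderiv ℝ (fun y => L (y, v)) x₀ := by
    intro x₀ v c hv hc
    have heq : (fun y => L (y, c • v)) = fun y => c * L (y, v) :=
      funext fun y => hhom y v c hc
    rw [heq, fderiv_const_mul (hD1 x₀ v hv) c]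
  -- monotonicity and image facts about φ
  have hmono : StrictMonoOn φ (Set.Icc a b) :=
    strictMonoOn_of_deriv_pos (convex_Icc a b) hφ.continuousOn
      (fun u hu => hφpos u (interior_subset hu))
  have hαβ : α < β := by
    rw [← hφa, ← hφb]
    exact hmono (Set.left_mem_Icc.2 hab) (Set.right_mem_Icc.2 hab) hlt
  have himg : φ '' Set.Ioo a b = Set.Ioo α β := by
    apply Set.Subset.antisymm
    · rintro t ⟨u, hu, rfl⟩
      refine ⟨?_, ?_⟩
      · rw [← hφa]
        exact hmono (Set.left_mem_Icc.2 hab) (Set.Ioo_subset_Icc_self hu) hu.1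
      · rw [← hφb]
        exact hmono (Set.Ioo_subset_Icc_self hu) (Set.right_mem_Icc.2 hab) hu.2
    · intro t ht
      have hiv := intermediate_value_Icc hab hφ.continuousOn
      rw [hφa, hφb] at hiv
      obtain ⟨u, hu, hut⟩ := hiv (Set.Ioo_subset_Icc_self ht)
      refine ⟨u, ⟨hu.1.lt_of_ne ?_, hu.2.lt_of_ne ?_⟩, hut⟩
      · rintro rfl
        rw [hφa] at hut
        exact ht.1.ne hut
      · rintro rfl
        rw [hφb] at hut
        exact ht.2.ne' hut
  have hφIoo : ∀ u ∈ Set.Ioo a b, φ u ∈ Set.Ioo α β :=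
    fun u hu => himg ▸ Set.mem_image_of_mem φ hu
  have hxC : ∀ t ∈ Set.Ioo α β, ContDiffAt ℝ 2 x t :=
    fun t ht => hx.contDiffAt (Icc_mem_nhds ht.1 ht.2)
  have hφC : ∀ u ∈ Set.Ioo a b, ContDiffAt ℝ 2 φ u :=
    fun u hu => hφ.contDiffAt (Icc_mem_nhds hu.1 hu.2)
  have hcomp_deriv : ∀ u ∈ Set.Ioo a b, deriv (x ∘ φ) u = deriv φ u • deriv x (φ u) := by
    intro u hu
    exact (HasDerivAt.scomp (h := φ) (x := u)
      (((hxC _ (hφIoo u hu)).differentiableAt (by norm_num)).hasDerivAt)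
      (((hφC u hu).differentiableAt (by norm_num)).hasDerivAt)).deriv
  -- the inner D₂ function agrees with (g ∘ φ) on Ioo a b
  have hinner_eq : Set.EqOn (fun s => fderiv ℝ (fun w => L ((x ∘ φ) s, w)) (deriv (x ∘ φ) s))
      ((fun t => fderiv ℝ (fun w => L (x t, w)) (deriv x t)) ∘ φ) (Set.Ioo a b) := by
    intro s hs
    show fderiv ℝ (fun w => L (x (φ s), w)) (deriv (x ∘ φ) s)
        = fderiv ℝ (fun w => L (x (φ s), w)) (deriv x (φ s))
    rw [hcomp_deriv s hs]
    exact hB (x (φ s)) (deriv x (φ s)) (deriv φ s)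
      (hx' _ (Set.Ioo_subset_Icc_self (hφIoo s hs)))
      (hφpos s (Set.Ioo_subset_Icc_self hs))
  -- pointwise identity of the integrands
  have hpt : ∀ u ∈ Set.Ioo a b,
      N (fderiv ℝ (fun y => L (y, deriv (x ∘ φ) u)) ((x ∘ φ) u)
        - deriv (fun s => fderiv ℝ (fun w => L ((x ∘ φ) s, w)) (deriv (x ∘ φ) s)) u)
      = deriv φ u * N (fderiv ℝ (fun y => L (y, deriv x (φ u))) (x (φ u))
        - deriv (fun t => fderiv ℝ (fun w => L (x t, w)) (deriv x t)) (φ u)) := by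
    intro u hu
    have hc : 0 < deriv φ u := hφpos u (Set.Ioo_subset_Icc_self hu)
    have ht : φ u ∈ Set.Ioo α β := hφIoo u hu
    have hv : deriv x (φ u) ≠ 0 := hx' _ (Set.Ioo_subset_Icc_self ht)
    have e1 : fderiv ℝ (fun y => L (y, deriv (x ∘ φ) u)) ((x ∘ φ) u)
        = deriv φ u • fderiv ℝ (fun y => L (y, deriv x (φ u))) (x (φ u)) := by
      show fderiv ℝ (fun y => L (y, deriv (x ∘ φ) u)) (x (φ u)) = _
      rw [hcomp_deriv u hu]
      exact hC (x (φ u)) (deriv x (φ u)) (deriv φ u) hv hc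
    have hev : (fun s => fderiv ℝ (fun w => L ((x ∘ φ) s, w)) (deriv (x ∘ φ) s))
        =ᶠ[𝓝 u] ((fun t => fderiv ℝ (fun w => L (x t, w)) (deriv x t)) ∘ φ) := by
      filter_upwards [Ioo_mem_nhds hu.1 hu.2] with s hs using hinner_eq hs
    have e2 : deriv (fun s => fderiv ℝ (fun w => L ((x ∘ φ) s, w)) (deriv (x ∘ φ) s)) u
        = deriv φ u • deriv (fun t => fderiv ℝ (fun w => L (x t, w)) (deriv x t)) (φ u) := by
      rw [hev.deriv_eq]
      exact deriv_comp_localdiffeo _ ((hφC u hu).hasStrictDerivAt (by norm_num))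
        (ne_of_gt hc)
    rw [e1, e2, show ∀ (A B : (Fin n → ℝ) →L[ℝ] ℝ), deriv φ u • A - deriv φ u • B = deriv φ u • (A - B) from fun A B => (smul_sub _ _ _).symm, hN _ _ hc]
  -- change of variables
  rw [intervalIntegral.integral_of_le hab, intervalIntegral.integral_of_le (le_of_lt hαβ),
    MeasureTheory.integral_Ioc_eq_integral_Ioo, MeasureTheory.integral_Ioc_eq_integral_Ioo]
  have key := MeasureTheory.integral_image_eq_integral_abs_deriv_smul (f := φ)
    (f' := deriv φ) measurableSet_Ioo
    (fun u hu => (((hφC u hu).differentiableAt (by norm_num)).hasDerivAt).hasDerivWithinAt)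
    (hmono.injOn.mono Set.Ioo_subset_Icc_self)
    (fun t => N (fderiv ℝ (fun y => L (y, deriv x t)) (x t)
      - deriv (fun s => fderiv ℝ (fun w => L (x s, w)) (deriv x s)) t))
  rw [himg] at key
  rw [key]
  apply MeasureTheory.setIntegral_congr_fun measurableSet_Ioo
  intro u hu
  dsimp only
  rw [hpt u hu]
  rw [abs_of_pos (hφpos u (Set.Ioo_subset_Icc_self hu)), smul_eq_mul]
end

section
/- Fix reals c > 0, m > 0, α > 0, β > 0 and v with 0 < v < c. Define the path X : (0, ∞) → (Fin 4 → ℝ) by X(t) = (β·c·(t − α/t), β·v·t, 0, 0), and let η(u, w) = u 0 · w 0 − u 1 · w 1 − u 2 · w 2 − u 3 · w 3 be the Minkowski bilinear form. Then X'(t) is timelike for every t > 0 (η(X'(t), X'(t)) > 0), and if U(t) = (η(X'(t), X'(t)))^{−1/2} • X'(t) denotes the normalized velocity, then for all t > 0 the Minkowski norm of m·c·U'(t) satisfies √|η(m·c·U'(t), m·c·U'(t))| = 2·m·v·α·t·c² / ((α + t²)²·c² − v²·t⁴). -/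
/-- The Minkowski bilinear form of signature (+, −, −, −) on `Fin 4 → ℝ`. -/
def minkowski (u w : Fin 4 → ℝ) : ℝ :=
  u 0 * w 0 - u 1 * w 1 - u 2 * w 2 - u 3 * w 3

set_option maxHeartbeats 1600000

/-- For the hyperbolic path `X(t) = β • (c(t − α/t), v t, 0, 0)` on `(0, ∞)`,
the velocity `X'(t)` is timelike, and the ageodesicity integrand for the
free-particle geometric Lagrangian — the Minkowski norm of `m c U'(t)`, where
`U` is the normalized velocity — equals
`2 m v α t c² / ((α + t²)² c² − v² t⁴)`. -/
theorem ageodesicity_integrand_of_hyperbolic_path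
    (c m α β v : ℝ) (hc : 0 < c) (hm : 0 < m) (hα : 0 < α) (hβ : 0 < β)
    (hv : 0 < v) (hvc : v < c)
    (X : ℝ → Fin 4 → ℝ)
    (hX : ∀ t : ℝ, X t = ![β * c * (t - α / t), β * v * t, 0, 0])
    (U : ℝ → Fin 4 → ℝ)
    (hU : ∀ t : ℝ,
      U t = (Real.sqrt (minkowski (deriv X t) (deriv X t)))⁻¹ • deriv X t) :
    ∀ t : ℝ, 0 < t →
      0 < minkowski (deriv X t) (deriv X t) ∧
      Real.sqrt |minkowski ((m * c) • deriv U t) ((m * c) • deriv U t)|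
        = 2 * m * v * α * t * c ^ 2 / ((α + t ^ 2) ^ 2 * c ^ 2 - v ^ 2 * t ^ 4) := by
  have hXf : X = fun t => ![β * c * (t - α / t), β * v * t, 0, 0] := funext hX
  have hf : ∀ s : ℝ, 0 < s →
      HasDerivAt (fun u : ℝ => β * c * (1 + α / u ^ 2)) (-(2 * β * c * α / s ^ 3)) s := by
    intro s hs
    have hp : HasDerivAt (fun u : ℝ => u ^ 2) (2 * s) s := by
      simpa using hasDerivAt_pow 2 s
    have hinv : HasDerivAt (fun u : ℝ => (u ^ 2)⁻¹) (-(2 * s) / (s ^ 2) ^ 2) s :=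
      hp.inv (by positivity)
    have h2 : HasDerivAt (fun u : ℝ => β * c * (1 + α * (u ^ 2)⁻¹))
        (β * c * (α * (-(2 * s) / (s ^ 2) ^ 2))) s :=
      ((hinv.const_mul α).const_add 1).const_mul (β * c)
    have heq : (fun u : ℝ => β * c * (1 + α / u ^ 2))
        = fun u : ℝ => β * c * (1 + α * (u ^ 2)⁻¹) := by
      funext u; rw [div_eq_mul_inv]
    rw [heq]
    convert h2 using 1
    field_simp
  have hXd : ∀ s : ℝ, 0 < s →
      HasDerivAt X (![β * c * (1 + α / s ^ 2), β * v, 0, 0]) s := by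
    intro s hs
    rw [hXf, hasDerivAt_pi]
    intro i
    fin_cases i
    · show HasDerivAt (fun u : ℝ => β * c * (u - α / u)) (β * c * (1 + α / s ^ 2)) s
      have h1 : HasDerivAt (fun u : ℝ => α / u) (α * -(s ^ 2)⁻¹) s :=
        (hasDerivAt_inv hs.ne').const_mul α
      have h2 : HasDerivAt (fun u : ℝ => u - α / u) (1 - α * -(s ^ 2)⁻¹) s :=
        (hasDerivAt_id s).sub h1
      have h3 := h2.const_mul (β * c)
      refine h3.congr_deriv ?_
      field_simp
      ring
    · show HasDerivAt (fun u : ℝ => β * v * u) (β * v) s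
      simpa using (hasDerivAt_id s).const_mul (β * v)
    · simpa using (hasDerivAt_const s (0 : ℝ))
    · simpa using (hasDerivAt_const s (0 : ℝ))
  have hmk : ∀ s : ℝ, 0 < s → minkowski (deriv X s) (deriv X s)
      = (β * c * (1 + α / s ^ 2)) ^ 2 - (β * v) ^ 2 := by
    intro s hs
    rw [(hXd s hs).deriv]
    simp [minkowski]
    ring
  have hQpos : ∀ s : ℝ, 0 < s → 0 < (β * c * (1 + α / s ^ 2)) ^ 2 - (β * v) ^ 2 := by
    intro s hs
    have h1 : 0 < α / s ^ 2 := by positivity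
    have hx : 0 < β * v := mul_pos hβ hv
    have hy : β * v < β * c * (1 + α / s ^ 2) := by
      nlinarith [mul_pos hβ (sub_pos.mpr hvc), mul_pos (mul_pos hβ hc) h1]
    nlinarith [mul_self_lt_mul_self hx.le hy]
  intro t ht
  refine ⟨by rw [hmk t ht]; exact hQpos t ht, ?_⟩
  have hEpos : 0 < (β * c * (1 + α / t ^ 2)) ^ 2 - (β * v) ^ 2 := hQpos t ht
  have hSpos : 0 < Real.sqrt ((β * c * (1 + α / t ^ 2)) ^ 2 - (β * v) ^ 2) :=
    Real.sqrt_pos.mpr hEpos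
  have hS2 : Real.sqrt ((β * c * (1 + α / t ^ 2)) ^ 2 - (β * v) ^ 2) ^ 2
      = (β * c * (1 + α / t ^ 2)) ^ 2 - (β * v) ^ 2 := Real.sq_sqrt hEpos.le
  set S := Real.sqrt ((β * c * (1 + α / t ^ 2)) ^ 2 - (β * v) ^ 2) with hSdef
  have hS2' : S ^ 2 * t ^ 4 = (β * c * (t ^ 2 + α)) ^ 2 - (β * v * t ^ 2) ^ 2 := by
    rw [hS2]; field_simp
  have hUW : deriv U t = deriv (fun s : ℝ =>
      (Real.sqrt ((β * c * (1 + α / s ^ 2)) ^ 2 - (β * v) ^ 2))⁻¹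
        • ![β * c * (1 + α / s ^ 2), β * v, 0, 0]) t := by
    apply Filter.EventuallyEq.deriv_eq
    filter_upwards [Ioi_mem_nhds ht] with s hs
    rw [hU s, hmk s hs, (hXd s hs).deriv]
  have hED : HasDerivAt (fun s : ℝ => (β * c * (1 + α / s ^ 2)) ^ 2 - (β * v) ^ 2)
      (2 * (β * c * (1 + α / t ^ 2)) ^ 1 * -(2 * β * c * α / t ^ 3)) t :=
    ((hf t ht).pow 2).sub_const _
  have hSd : HasDerivAt (fun s : ℝ =>
      Real.sqrt ((β * c * (1 + α / s ^ 2)) ^ 2 - (β * v) ^ 2))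
      (2 * (β * c * (1 + α / t ^ 2)) ^ 1 * -(2 * β * c * α / t ^ 3) / (2 * S)) t :=
    hED.sqrt hEpos.ne'
  have hSinv : HasDerivAt (fun s : ℝ =>
      (Real.sqrt ((β * c * (1 + α / s ^ 2)) ^ 2 - (β * v) ^ 2))⁻¹)
      (-(2 * (β * c * (1 + α / t ^ 2)) ^ 1 * -(2 * β * c * α / t ^ 3) / (2 * S)) / S ^ 2) t :=
    hSd.inv hSpos.ne'
  have hW : HasDerivAt (fun s : ℝ =>
      (Real.sqrt ((β * c * (1 + α / s ^ 2)) ^ 2 - (β * v) ^ 2))⁻¹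
        • ![β * c * (1 + α / s ^ 2), β * v, 0, 0])
      ![2 * β ^ 3 * c ^ 3 * α * (1 + α / t ^ 2) ^ 2 / (t ^ 3 * S ^ 3) - 2 * β * c * α / (t ^ 3 * S),
        2 * β ^ 3 * c ^ 2 * v * α * (1 + α / t ^ 2) / (t ^ 3 * S ^ 3), 0, 0] t := by
    rw [hasDerivAt_pi]
    intro i
    fin_cases i
    · show HasDerivAt (fun s : ℝ =>
          (Real.sqrt ((β * c * (1 + α / s ^ 2)) ^ 2 - (β * v) ^ 2))⁻¹
            * (β * c * (1 + α / s ^ 2)))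
          (2 * β ^ 3 * c ^ 3 * α * (1 + α / t ^ 2) ^ 2 / (t ^ 3 * S ^ 3)
            - 2 * β * c * α / (t ^ 3 * S)) t
      have h0 := hSinv.mul (hf t ht)
      refine h0.congr_deriv ?_
      rw [← hSdef]
      field_simp [hSpos.ne', ht.ne']
      ring
    · show HasDerivAt (fun s : ℝ =>
          (Real.sqrt ((β * c * (1 + α / s ^ 2)) ^ 2 - (β * v) ^ 2))⁻¹ * (β * v))
          (2 * β ^ 3 * c ^ 2 * v * α * (1 + α / t ^ 2) / (t ^ 3 * S ^ 3)) t
      have h0 := hSinv.mul_const (β * v)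
      refine h0.congr_deriv ?_
      field_simp [hSpos.ne', ht.ne']
    · simpa using (hasDerivAt_const t (0 : ℝ))
    · simpa using (hasDerivAt_const t (0 : ℝ))
  have hT0 : 2 * β ^ 3 * c ^ 3 * α * (1 + α / t ^ 2) ^ 2 / (t ^ 3 * S ^ 3)
      - 2 * β * c * α / (t ^ 3 * S) = 2 * β ^ 3 * c * v ^ 2 * α / (t ^ 3 * S ^ 3) := by
    field_simp [hSpos.ne', ht.ne']
    linear_combination (-1 : ℝ) * hS2'
  have hDU : deriv U t = ![2 * β ^ 3 * c * v ^ 2 * α / (t ^ 3 * S ^ 3),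
      2 * β ^ 3 * c ^ 2 * v * α * (1 + α / t ^ 2) / (t ^ 3 * S ^ 3), 0, 0] := by
    rw [hUW, hW.deriv, hT0]
  rw [hDU]
  have hM : minkowski ((m * c) • ![2 * β ^ 3 * c * v ^ 2 * α / (t ^ 3 * S ^ 3),
      2 * β ^ 3 * c ^ 2 * v * α * (1 + α / t ^ 2) / (t ^ 3 * S ^ 3), 0, 0])
      ((m * c) • ![2 * β ^ 3 * c * v ^ 2 * α / (t ^ 3 * S ^ 3),
      2 * β ^ 3 * c ^ 2 * v * α * (1 + α / t ^ 2) / (t ^ 3 * S ^ 3), 0, 0])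
      = -(4 * m ^ 2 * β ^ 4 * c ^ 4 * v ^ 2 * α ^ 2
          * ((β * c * (1 + α / t ^ 2)) ^ 2 - (β * v) ^ 2)) / (t ^ 6 * S ^ 6) := by
    simp only [minkowski, Pi.smul_apply, smul_eq_mul, Matrix.cons_val_zero,
      Matrix.cons_val_one, Matrix.head_cons, Matrix.cons_val_two, Matrix.tail_cons,
      Matrix.cons_val_three]
    field_simp [hSpos.ne', ht.ne']
    ring
  have hM2 : -(4 * m ^ 2 * β ^ 4 * c ^ 4 * v ^ 2 * α ^ 2
          * ((β * c * (1 + α / t ^ 2)) ^ 2 - (β * v) ^ 2)) / (t ^ 6 * S ^ 6)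
      = -(2 * m * β ^ 2 * c ^ 2 * v * α / (t ^ 3 * S ^ 2)) ^ 2 := by
    rw [← hS2]
    field_simp [hSpos.ne', ht.ne']
    ring
  rw [hM, hM2, abs_neg, abs_of_nonneg (sq_nonneg _), Real.sqrt_sq (by positivity)]
  rw [hS2]
  have hden : 0 < (α + t ^ 2) ^ 2 * c ^ 2 - v ^ 2 * t ^ 4 := by
    have hcv : v ^ 2 < c ^ 2 := by nlinarith
    nlinarith [pow_pos ht 4, mul_pos (mul_pos hα (pow_pos ht 2)) (mul_pos hc hc),
      mul_pos (mul_pos hα hα) (mul_pos hc hc)]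
  have hE' : ((β * c * (1 + α / t ^ 2)) ^ 2 - (β * v) ^ 2)
      = β ^ 2 * ((α + t ^ 2) ^ 2 * c ^ 2 - v ^ 2 * t ^ 4) / t ^ 4 := by
    field_simp
    ring
  rw [hE']
  field_simp
end

section
/- Fix reals c > 0, m > 0, α > 0 and v with 0 < v < c. Then the improper integral ∫_0^∞ 2·m·v·α·t·c² / ((α + t²)²·c² − v²·t⁴) dt converges and equals (m·c/2)·ln((c + v)/(c − v)) = m·c·artanh(v/c). In particular, the value does not depend on α. -/
/-- The real inverse hyperbolic tangent, defined on `(−1, 1)`. -/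
noncomputable def artanh (x : ℝ) : ℝ := (1 / 2) * Real.log ((1 + x) / (1 - x))

/-- The ageodesicity of the hyperbolic free-particle path: the improper
integral over `(0, ∞)` of `2 m v α t c² / ((α + t²)² c² − v² t⁴)` converges
and equals `(m c / 2) ln((c + v)/(c − v)) = m c · artanh(v/c)`; in particular
it does not depend on `α`. -/
theorem ageodesicity_of_hyperbolic_path
    (c m α v : ℝ) (hc : 0 < c) (hm : 0 < m) (hα : 0 < α)
    (hv : 0 < v) (hvc : v < c) :
    MeasureTheory.IntegrableOn
      (fun t : ℝ =>
        2 * m * v * α * t * c ^ 2 / ((α + t ^ 2) ^ 2 * c ^ 2 - v ^ 2 * t ^ 4))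
      (Set.Ioi 0) ∧
    (∫ t in Set.Ioi (0 : ℝ),
        2 * m * v * α * t * c ^ 2 / ((α + t ^ 2) ^ 2 * c ^ 2 - v ^ 2 * t ^ 4))
      = (m * c / 2) * Real.log ((c + v) / (c - v)) ∧
    (m * c / 2) * Real.log ((c + v) / (c - v)) = m * c * artanh (v / c) := by
  have hcv : (0:ℝ) < c - v := by linarith
  have hcvp : (0:ℝ) < c + v := by linarith
  set f : ℝ → ℝ := fun t =>
    2 * m * v * α * t * c ^ 2 / ((α + t ^ 2) ^ 2 * c ^ 2 - v ^ 2 * t ^ 4) with hf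
  set A : ℝ → ℝ := fun t => c * α + (c + v) * t ^ 2 with hA
  set B : ℝ → ℝ := fun t => c * α + (c - v) * t ^ 2 with hB
  set g : ℝ → ℝ := fun t => (m * c / 2) * (Real.log (A t) - Real.log (B t)) with hg
  have hApos : ∀ t : ℝ, 0 < A t := fun t => by
    have : (0:ℝ) ≤ (c + v) * t ^ 2 := by positivity
    simp only [hA]; nlinarith [mul_pos hc hα]
  have hBpos : ∀ t : ℝ, 0 < B t := fun t => by
    have : (0:ℝ) ≤ (c - v) * t ^ 2 := by positivity
    simp only [hB]; nlinarith [mul_pos hc hα]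
  have hDen : ∀ t : ℝ, (α + t ^ 2) ^ 2 * c ^ 2 - v ^ 2 * t ^ 4 = A t * B t := by
    intro t; simp only [hA, hB]; ring
  have hDpos : ∀ t : ℝ, 0 < (α + t ^ 2) ^ 2 * c ^ 2 - v ^ 2 * t ^ 4 := fun t => by
    rw [hDen]; exact mul_pos (hApos t) (hBpos t)
  -- continuity of g
  have hcontA : Continuous A := by continuity
  have hcontB : Continuous B := by continuity
  have hcontg : Continuous g := by
    apply Continuous.mul continuous_const
    exact (hcontA.log (fun t => (hApos t).ne')).sub (hcontB.log (fun t => (hBpos t).ne'))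
  -- derivative
  have hderiv : ∀ t ∈ Set.Ioi (0:ℝ), HasDerivAt g (f t) t := by
    intro t _
    have hA' : HasDerivAt A ((c + v) * (2 * t)) t := by
      exact (((hasDerivAt_pow 2 t).const_mul (c + v)).const_add (c * α)).congr_deriv (by norm_num)
    have hB' : HasDerivAt B ((c - v) * (2 * t)) t := by
      exact (((hasDerivAt_pow 2 t).const_mul (c - v)).const_add (c * α)).congr_deriv (by norm_num)
    have hlogA := hA'.log (hApos t).ne'
    have hlogB := hB'.log (hBpos t).ne'
    have h : HasDerivAt g (m * c / 2 * ((c + v) * (2 * t) / A t - (c - v) * (2 * t) / B t)) t :=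
      (hlogA.sub hlogB).const_mul (m * c / 2)
    convert h using 1
    simp only [hf, hA, hB]
    rw [div_eq_iff (hDpos t).ne']
    field_simp
    ring
  -- nonnegativity
  have hpos : ∀ t ∈ Set.Ioi (0:ℝ), 0 ≤ f t := by
    intro t ht
    have ht' : 0 < t := ht
    apply div_nonneg _ (hDpos t).le
    positivity
  -- limit at infinity
  have hratio : Filter.Tendsto (fun t => A t / B t) Filter.atTop (nhds ((c + v) / (c - v))) := by
    have h1 : Filter.Tendsto (fun t : ℝ => c * α / t ^ 2) Filter.atTop (nhds 0) := by
      exact Filter.Tendsto.div_atTop tendsto_const_nhds (Filter.tendsto_pow_atTop two_ne_zero)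
    have h2 : Filter.Tendsto (fun t : ℝ => (c * α / t ^ 2 + (c + v)) / (c * α / t ^ 2 + (c - v)))
        Filter.atTop (nhds ((c + v) / (c - v))) := by
      have := (h1.add_const (c + v)).div (h1.add_const (c - v)) (by
        simpa using hcv.ne')
      rw [zero_add, zero_add] at this
      exact this
    refine h2.congr' ?_
    filter_upwards [Filter.eventually_gt_atTop (0:ℝ)] with t ht
    have ht2 : t ^ 2 ≠ 0 := by positivity
    simp only [hA, hB]
    field_simp
  have htends : Filter.Tendsto g Filter.atTop
      (nhds ((m * c / 2) * Real.log ((c + v) / (c - v)))) := by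
    have hlog : Filter.Tendsto (fun t => Real.log (A t / B t)) Filter.atTop
        (nhds (Real.log ((c + v) / (c - v)))) :=
      (Real.continuousAt_log (by positivity)).tendsto.comp hratio
    have : ∀ t : ℝ, Real.log (A t / B t) = Real.log (A t) - Real.log (B t) := fun t =>
      Real.log_div (hApos t).ne' (hBpos t).ne'
    simp only [this] at hlog
    exact hlog.const_mul _
  have hint := MeasureTheory.integrableOn_Ioi_deriv_of_nonneg
      hcontg.continuousWithinAt hderiv hpos htends
  have hval := MeasureTheory.integral_Ioi_of_hasDerivAt_of_nonneg
      hcontg.continuousWithinAt hderiv hpos htends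
  have hg0 : g 0 = 0 := by simp [hg, hA, hB]
  refine ⟨hint, ?_, ?_⟩
  · rw [hval, hg0, sub_zero]
  · have h1 : (1 + v / c) / (1 - v / c) = (c + v) / (c - v) := by
      rw [div_eq_div_iff (sub_pos.mpr ((div_lt_one hc).mpr hvc)).ne' hcv.ne']
      field_simp
    rw [artanh, h1]; ring
end
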